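/- arXiv:0904.2872 — 2 statements merged into one kernel-verified Lean document; each statement's English description precedes it below -/
import Mathlib

section
/- For every nonempty factor U of the Tribonacci word t, there exists a factor u of t and δ ∈ {-1,0,1} such that the Parikh vector of U equals (|u|+δ, |u|₀, |u|₁); moreover, if |U| ≥ 3 then |u| < |U|. -/
/-- The Tribonacci morphism τ: 0↦01, 1↦02, 2↦0, extended to words. -/
def tau : List (Fin 3) → List (Fin 3) :=
  fun w => w.flatMap (fun a => if a = 0 then [0, 1] else if a = 1 then [0, 2] else [0])

/-- The Tribonacci word, the fixed point of τ starting with 0.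
Since τⁿ(0) is a prefix of τⁿ⁺¹(0) and |τ^(n+1)(0)| > n, this is well defined. -/
def trib : ℕ → Fin 3 := fun n => (tau^[n + 1] [0]).getD n 0

/-- `u` is a (finite, contiguous) factor of the Tribonacci word. -/
def IsFactor (u : List (Fin 3)) : Prop :=
  ∃ i : ℕ, u = (List.range u.length).map (fun j => trib (i + j))

def blen : Fin 3 → ℕ := fun a => if a = 2 then 1 else 2

def sig : ℕ → ℕ
  | 0 => 0
  | k + 1 => sig k + blen (trib k)

def fac (i L : ℕ) : List (Fin 3) := (List.range L).map (fun j => trib (i + j))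

lemma tau_append (w w' : List (Fin 3)) : tau (w ++ w') = tau w ++ tau w' := by simp [tau]

lemma tau_cons (a : Fin 3) (w : List (Fin 3)) : tau (a :: w) = tau [a] ++ tau w := by simp [tau]

lemma tau_single_length (a : Fin 3) : (tau [a]).length = blen a := by fin_cases a <;> decide

lemma blen_pos (a : Fin 3) : 1 ≤ blen a := by fin_cases a <;> decide
lemma blen_le (a : Fin 3) : blen a ≤ 2 := by fin_cases a <;> decide

lemma tau_prefix {w w' : List (Fin 3)} (h : w <+: w') : tau w <+: tau w' := by
  obtain ⟨t, rfl⟩ := h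
  exact ⟨tau t, (tau_append w t).symm⟩

lemma P_prefix (N : ℕ) : tau^[N] [0] <+: tau^[N + 1] [0] := by
  induction N with
  | zero => exact ⟨[1], by decide⟩
  | succ N ih =>
    rw [Function.iterate_succ_apply', Function.iterate_succ_apply']
    exact tau_prefix ih

lemma P_prefix_le {M N : ℕ} (h : M ≤ N) : tau^[M] [0] <+: tau^[N] [0] := by
  induction N with
  | zero => simp_all
  | succ N ih =>
    rcases Nat.lt_or_ge M (N + 1) with h' | h'
    · exact (ih (by omega)).trans (P_prefix N)
    · have : M = N + 1 := by omega
      subst this; exact List.prefix_rfl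

lemma tau_length_ge (w : List (Fin 3)) : w.length + w.count 0 ≤ (tau w).length := by
  induction w with
  | nil => simp [tau]
  | cons a w ih =>
    rw [tau_cons, List.length_append, tau_single_length, List.length_cons, List.count_cons]
    fin_cases a <;> simp_all [blen] <;> omega

lemma P_length (N : ℕ) : N + 1 ≤ (tau^[N] [0]).length := by
  induction N with
  | zero => simp
  | succ N ih =>
    have h0 : (0 : Fin 3) ∈ tau^[N] [0] := (P_prefix_le (Nat.zero_le N)).subset (by simp)
    have hc : 1 ≤ (tau^[N] [0]).count 0 := List.count_pos_iff.mpr h0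
    have := tau_length_ge (tau^[N] [0])
    rw [Function.iterate_succ_apply']
    omega

lemma getD_prefix {w w' : List (Fin 3)} (h : w <+: w') {n : ℕ} (hn : n < w.length) :
    w'.getD n 0 = w.getD n 0 := by
  obtain ⟨t, rfl⟩ := h
  rw [List.getD_append _ _ _ _ hn]

lemma trib_eq_P {N n : ℕ} (hn : n < (tau^[N] [0]).length) :
    trib n = (tau^[N] [0]).getD n 0 := by
  have hn' : n < (tau^[n + 1] [0]).length := lt_of_lt_of_le (by omega) (P_length (n + 1))
  unfold trib
  rcases le_total (n + 1) N with h | h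
  · exact (getD_prefix (P_prefix_le h) hn').symm
  · exact getD_prefix (P_prefix_le h) hn

lemma sig_succ (k : ℕ) : sig (k + 1) = sig k + blen (trib k) := rfl

lemma sig_add_le (k d : ℕ) : sig k + d ≤ sig (k + d) := by
  induction d with
  | zero => simp
  | succ d ih =>
    have := blen_pos (trib (k + d))
    have h : sig (k + (d + 1)) = sig (k + d) + blen (trib (k + d)) := rfl
    omega

lemma sig_mono {k m : ℕ} (h : k ≤ m) : sig k ≤ sig m := by
  have := sig_add_le k (m - k)
  rw [Nat.add_sub_cancel' h] at this
  omega

lemma self_le_sig (k : ℕ) : k ≤ sig k := by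
  have := sig_add_le 0 k
  simpa [sig] using this

lemma tau_take_length (N k : ℕ) (hk : k ≤ (tau^[N] [0]).length) :
    (tau ((tau^[N] [0]).take k)).length = sig k := by
  induction k with
  | zero => simp [tau, sig]
  | succ k ih =>
    have hk' : k < (tau^[N] [0]).length := hk
    rw [List.take_succ, List.getElem?_eq_getElem hk']
    rw [show (some (tau^[N] [0])[k]).toList = [(tau^[N] [0])[k]] from rfl]
    rw [tau_append, List.length_append, ih (by omega), tau_single_length]
    rw [show (tau^[N] [0])[k] = trib k from by
      rw [trib_eq_P hk', List.getD_eq_getElem _ _ hk']]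
    rfl

lemma getD_append_right' (A B : List (Fin 3)) (j : ℕ) :
    (A ++ B).getD (A.length + j) 0 = B.getD j 0 := by
  simp [List.getD_eq_getElem?_getD, List.getElem?_append_right]

lemma trib_block (k j : ℕ) (hj : j < blen (trib k)) :
    trib (sig k + j) = (tau [trib k]).getD j 0 := by
  set N := sig (k + 1) with hN
  have hkk : k < sig (k + 1) := lt_of_le_of_lt (self_le_sig k)
    (by rw [sig_succ]; have := blen_pos (trib k); omega)
  have hlenN : N + 1 ≤ (tau^[N] [0]).length := P_length N
  have hkN : k < (tau^[N] [0]).length := by omega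
  have hlt : sig k + j < sig (k + 1) := by rw [sig_succ]; omega
  have hlen1 : (tau^[N] [0]).length ≤ (tau^[N+1] [0]).length := (P_prefix N).length_le
  have h1 : trib (sig k + j) = (tau (tau^[N] [0])).getD (sig k + j) 0 := by
    have := trib_eq_P (N := N + 1) (n := sig k + j) (by omega)
    rwa [Function.iterate_succ_apply'] at this
  have hsplit : tau (tau^[N] [0]) =
      tau ((tau^[N] [0]).take k) ++ tau ((tau^[N] [0]).drop k) := by
    rw [← tau_append, List.take_append_drop]
  have hdrop : (tau^[N] [0]).drop k = trib k :: (tau^[N] [0]).drop (k + 1) := by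
    rw [List.drop_eq_getElem_cons hkN]
    congr 1
    rw [trib_eq_P hkN, List.getD_eq_getElem _ _ hkN]
  have htk : (tau ((tau^[N] [0]).take k)).length = sig k := tau_take_length N k (le_of_lt hkN)
  rw [h1, hsplit, ← htk, getD_append_right', hdrop, tau_cons]
  rw [List.getD_append _ _ _ _ (by rw [tau_single_length]; exact hj)]

lemma trib_sig (k : ℕ) : trib (sig k) = 0 := by
  have h := trib_block k 0 (blen_pos _)
  have h2 : ∀ a : Fin 3, (tau [a]).getD 0 0 = 0 := by decide
  rw [h2 (trib k)] at h
  simpa using h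

lemma trib_sig1_of0 {k : ℕ} (h : trib k = 0) : trib (sig k + 1) = 1 := by
  have := trib_block k 1 (by rw [h]; decide)
  rw [h] at this
  rw [this]; decide

lemma trib_sig1_of1 {k : ℕ} (h : trib k = 1) : trib (sig k + 1) = 2 := by
  have := trib_block k 1 (by rw [h]; decide)
  rw [h] at this
  rw [this]; decide

lemma exists_block (j : ℕ) : ∃ k, sig k ≤ j ∧ j < sig (k + 1) := by
  have hne : ∃ m, j < sig m := ⟨j + 1, lt_of_lt_of_le (by omega) (self_le_sig (j + 1))⟩
  have hspec := Nat.find_spec hne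
  have hm0 : Nat.find hne ≠ 0 := by
    intro h
    rw [h] at hspec
    simp [sig] at hspec
  refine ⟨Nat.find hne - 1, ?_, ?_⟩
  · have := Nat.find_min hne (m := Nat.find hne - 1) (by omega)
    omega
  · have : Nat.find hne - 1 + 1 = Nat.find hne := by omega
    rw [this]; exact hspec

lemma trib_two_succ {j : ℕ} (h : trib j = 2) : trib (j + 1) = 0 := by
  obtain ⟨k, h1, h2⟩ := exists_block j
  have hb := blen_le (trib k)
  have hs : sig (k + 1) = sig k + blen (trib k) := rfl
  rcases Nat.eq_or_lt_of_le h1 with he | hl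
  · have := trib_sig k
    rw [he, h] at this
    exact absurd this (by decide)
  · have hj : j = sig k + 1 := by omega
    have hup : j + 1 = sig (k + 1) := by omega
    rw [hup]; exact trib_sig (k + 1)

lemma sig_two_step (k : ℕ) : sig k + 3 ≤ sig (k + 2) := by
  show sig k + 3 ≤ sig (k + 1 + 1)
  have h1 := sig_succ k
  have h2 := sig_succ (k + 1)
  have hb1 := blen_pos (trib k)
  have hb2 := blen_pos (trib (k + 1))
  by_cases h : trib k = 2
  · have h0 := trib_two_succ h
    have : blen (trib (k + 1)) = 2 := by rw [h0]; decide
    omega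
  · have : blen (trib k) = 2 := by simp [blen, h]
    omega

lemma fac_length (i L : ℕ) : (fac i L).length = L := by simp [fac]

lemma fac_isFactor (i L : ℕ) : IsFactor (fac i L) := ⟨i, by simp [fac]⟩

lemma fac_zero (i : ℕ) : fac i 0 = [] := by simp [fac]

lemma fac_succ (i L : ℕ) : fac i (L + 1) = fac i L ++ [trib (i + L)] := by
  simp [fac, List.range_succ]

lemma fac_split (i a b : ℕ) : fac i (a + b) = fac i a ++ fac (i + a) b := by
  induction b with
  | zero => simp [fac_zero]
  | succ b ih =>
    rw [show a + (b + 1) = (a + b) + 1 from rfl, fac_succ, ih, fac_succ, List.append_assoc,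
      show i + (a + b) = i + a + b from by omega]

lemma fac_glue {i a j : ℕ} (b : ℕ) (h : j = i + a) :
    fac i a ++ fac j b = fac i (a + b) := by
  subst h; exact (fac_split i a b).symm

lemma fac_one (i : ℕ) : fac i 1 = [trib i] := by simp [fac, List.range_succ]

lemma tau_single_eq (k : ℕ) : tau [trib k] = fac (sig k) (blen (trib k)) := by
  have h0 := trib_sig k
  have hall : ∀ a : Fin 3, a = 0 ∨ a = 1 ∨ a = 2 := by decide
  have hsplit2 : ∀ m, fac m 2 = [trib m, trib (m + 1)] := by
    intro m
    rw [show (2 : ℕ) = 1 + 1 from rfl, fac_split, fac_one, fac_one]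
    rfl
  rcases hall (trib k) with h | h | h <;> rw [h]
  · rw [show blen (0 : Fin 3) = 2 from rfl, hsplit2, h0, trib_sig1_of0 h]
    decide
  · rw [show blen (1 : Fin 3) = 2 from rfl, hsplit2, h0, trib_sig1_of1 h]
    decide
  · rw [show blen (2 : Fin 3) = 1 from rfl, fac_one, h0]
    decide

lemma tau_fac (k d : ℕ) : tau (fac k d) = fac (sig k) (sig (k + d) - sig k) := by
  induction d with
  | zero => simp [fac_zero, tau]
  | succ d ih =>
    have h1 : sig k ≤ sig (k + d) := sig_mono (by omega)
    have h2 : sig (k + d) ≤ sig (k + d + 1) := sig_mono (by omega)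
    rw [show k + (d + 1) = (k + d) + 1 from rfl, fac_succ, tau_append, ih, tau_single_eq (k + d)]
    rw [fac_glue _ (by omega)]
    congr 1
    have h3 := sig_succ (k + d)
    omega

lemma count_tau0 (w : List (Fin 3)) : (tau w).count 0 = w.length := by
  induction w with
  | nil => simp [tau]
  | cons a w ih =>
    rw [tau_cons, List.count_append, ih]
    have : ∀ b : Fin 3, (tau [b]).count 0 = 1 := by decide
    rw [this a, List.length_cons]
    omega

lemma count_tau1 (w : List (Fin 3)) : (tau w).count 1 = w.count 0 := by
  induction w with
  | nil => simp [tau]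
  | cons a w ih =>
    rw [tau_cons, List.count_append, ih, show a :: w = [a] ++ w from rfl, List.count_append]
    congr 1
    fin_cases a <;> decide

lemma count_tau2 (w : List (Fin 3)) : (tau w).count 2 = w.count 1 := by
  induction w with
  | nil => simp [tau]
  | cons a w ih =>
    rw [tau_cons, List.count_append, ih, show a :: w = [a] ++ w from rfl, List.count_append]
    congr 1
    fin_cases a <;> decide

lemma s_counts (m e : ℕ) (he : e ≤ 1) :
    (fac (sig m) e).count 0 = e ∧ (fac (sig m) e).count 1 = 0 ∧ (fac (sig m) e).count 2 = 0 := by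
  interval_cases e
  · simp [fac_zero]
  · rw [fac_one, trib_sig]
    refine ⟨by decide, by decide, by decide⟩

lemma decomp (i n k1 m1 : ℕ) (h1 : i ≤ sig k1) (h2 : k1 ≤ m1) (h3 : sig m1 ≤ i + n) :
    fac i n = fac i (sig k1 - i) ++ tau (fac k1 (m1 - k1)) ++ fac (sig m1) (i + n - sig m1) := by
  have hs : sig k1 ≤ sig m1 := sig_mono h2
  rw [tau_fac, show k1 + (m1 - k1) = m1 from by omega]
  conv_lhs => rw [show n = (sig k1 - i) + ((sig m1 - sig k1) + (i + n - sig m1)) from by omega]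
  rw [fac_split, fac_split, show i + (sig k1 - i) = sig k1 from by omega,
      show sig k1 + (sig m1 - sig k1) = sig m1 from by omega, List.append_assoc]

lemma len_bound {i n k1 m1 r e : ℕ} (hr : r ≤ 1) (hsk : sig k1 = i + r)
    (h2 : k1 ≤ m1) (h3 : sig m1 + e = i + n) (h4 : 3 ≤ n) : (m1 - k1) + r < n := by
  rcases le_or_gt (m1 - k1) 1 with h | h
  · omega
  · have ha : sig (k1 + 2) + (m1 - (k1 + 2)) ≤ sig m1 := by
      have := sig_add_le (k1 + 2) (m1 - (k1 + 2))
      rw [Nat.add_sub_cancel' (by omega)] at this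
      omega
    have hb := sig_two_step k1
    have hc : sig k1 ≤ sig m1 := sig_mono h2
    omega

theorem tribonacci_parikh_desubstitution :
    ∀ U : List (Fin 3), IsFactor U → U ≠ [] →
      ∃ (u : List (Fin 3)) (δ : ℤ), IsFactor u ∧ δ ∈ ({-1, 0, 1} : Set ℤ) ∧
        (U.count 0 : ℤ) = (u.length : ℤ) + δ ∧
        U.count 1 = u.count 0 ∧ U.count 2 = u.count 1 ∧
        (3 ≤ U.length → u.length < U.length) := by
  intro U hU hne
  obtain ⟨i, hUeq⟩ := hU
  obtain ⟨n, hn⟩ : ∃ n, U.length = n := ⟨_, rfl⟩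
  have hn1 : 1 ≤ n := by rw [← hn]; exact List.length_pos_iff.mpr hne
  rw [hn] at hUeq
  have hUfac : U = fac i n := hUeq
  obtain ⟨k0, hk0a, hk0b⟩ := exists_block i
  obtain ⟨m1, hm1a, hm1b⟩ := exists_block (i + n)
  have hsk0 := sig_succ k0
  have hsm1 := sig_succ m1
  have hbk0 := blen_le (trib k0)
  have hbm1 := blen_le (trib m1)
  by_cases hi : i = sig k0
  · -- starts at a block boundary: p = []
    have hk1m : k0 ≤ m1 := by
      by_contra h
      have : sig (m1 + 1) ≤ sig k0 := sig_mono (by omega)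
      omega
    have hdec := decomp i n k0 m1 (by omega) hk1m (by omega)
    rw [show sig k0 - i = 0 from by omega, fac_zero, List.nil_append] at hdec
    set e := i + n - sig m1 with he
    have he1 : e ≤ 1 := by omega
    have hse : sig m1 + e = i + n := by omega
    have hscount := s_counts m1 e he1
    refine ⟨fac k0 (m1 - k0), (e : ℤ), fac_isFactor _ _, ?_, ?_, ?_, ?_, ?_⟩
    · simp only [Set.mem_insert_iff, Set.mem_singleton_iff]; omega
    · rw [hUfac, hdec, List.count_append, count_tau0, fac_length, hscount.1]
      push_cast
      ring
    · rw [hUfac, hdec, List.count_append, count_tau1, hscount.2.1]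
      omega
    · rw [hUfac, hdec, List.count_append, count_tau2, hscount.2.2]
      omega
    · rw [hn, fac_length]
      intro h3
      have := len_bound (r := 0) (by omega) (by omega) hk1m hse h3
      omega
  · -- starts mid-block
    have hi1 : i = sig k0 + 1 := by omega
    have hbk2 : blen (trib k0) = 2 := by
      have := blen_pos (trib k0); omega
    have htk0 : trib k0 = 0 ∨ trib k0 = 1 := by
      have hall : ∀ a : Fin 3, a = 0 ∨ a = 1 ∨ a = 2 := by decide
      rcases hall (trib k0) with h | h | h
      · exact Or.inl h
      · exact Or.inr h
      · rw [h] at hbk2; exact absurd hbk2 (by decide)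
    have hsk1 : sig (k0 + 1) = i + 1 := by omega
    have hk1m : k0 + 1 ≤ m1 := by
      by_contra h
      have : sig (m1 + 1) ≤ sig (k0 + 1) := sig_mono (by omega)
      omega
    have hdec := decomp i n (k0 + 1) m1 (by omega) hk1m (by omega)
    rw [show sig (k0 + 1) - i = 1 from by omega, fac_one] at hdec
    set e := i + n - sig m1 with he
    have he1 : e ≤ 1 := by omega
    have hse : sig m1 + e = i + n := by omega
    have hscount := s_counts m1 e he1
    have hu : fac k0 (m1 - k0) = [trib k0] ++ fac (k0 + 1) (m1 - (k0 + 1)) := by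
      conv_lhs => rw [show m1 - k0 = 1 + (m1 - (k0 + 1)) from by omega]
      rw [fac_split, fac_one]
    have hulen : (fac k0 (m1 - k0)).length = (m1 - (k0 + 1)) + 1 := by
      rw [fac_length]; omega
    refine ⟨fac k0 (m1 - k0), (e : ℤ) - 1, fac_isFactor _ _, ?_, ?_, ?_, ?_, ?_⟩
    · simp only [Set.mem_insert_iff, Set.mem_singleton_iff]; omega
    · rw [hUfac, hdec, List.count_append, List.count_append, count_tau0, fac_length,
        hscount.1, hulen]
      have hp0 : ([trib i] : List (Fin 3)).count 0 = 0 := by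
        rcases htk0 with h | h
        · rw [hi1, trib_sig1_of0 h]; decide
        · rw [hi1, trib_sig1_of1 h]; decide
      rw [hp0]
      push_cast
      ring
    · rw [hUfac, hdec, List.count_append, List.count_append, count_tau1, hscount.2.1, hu,
        List.count_append]
      rcases htk0 with h | h
      · rw [h, hi1, trib_sig1_of0 h]
        have c1 : ([(1 : Fin 3)] : List (Fin 3)).count 1 = 1 := by decide
        have c0 : ([(0 : Fin 3)] : List (Fin 3)).count 0 = 1 := by decide
        omega
      · rw [h, hi1, trib_sig1_of1 h]
        have c1 : ([(2 : Fin 3)] : List (Fin 3)).count 1 = 0 := by decide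
        have c0 : ([(1 : Fin 3)] : List (Fin 3)).count 0 = 0 := by decide
        omega
    · rw [hUfac, hdec, List.count_append, List.count_append, count_tau2, hscount.2.2, hu,
        List.count_append]
      rcases htk0 with h | h
      · rw [h, hi1, trib_sig1_of0 h]
        have c1 : ([(1 : Fin 3)] : List (Fin 3)).count 2 = 0 := by decide
        have c0 : ([(0 : Fin 3)] : List (Fin 3)).count 1 = 0 := by decide
        omega
      · rw [h, hi1, trib_sig1_of1 h]
        have c1 : ([(2 : Fin 3)] : List (Fin 3)).count 2 = 1 := by decide
        have c0 : ([(1 : Fin 3)] : List (Fin 3)).count 1 = 1 := by decide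
        omega
    · rw [hn, hulen]
      intro h3
      have := len_bound (r := 1) (by omega) (by omega) hk1m hse h3
      omega
end

section
/- Every natural number N has a unique Zeckendorf-type Tribonacci representation N = Σ_{k≥0} p_k T_k with p_k ∈ {0,1}, only finitely many p_k nonzero, and such that p_k = p_{k-1} = 1 implies p_{k-2} = 0 (for k ≥ 2), and no two consecutive indices among the first two may both be 1 together with the third, i.e., there are never three consecutive 1's. -/
/-- The Tribonacci numbers. -/
def T : ℕ → ℕ
  | 0 => 1
  | 1 => 2
  | 2 => 4
  | (k + 3) => T (k + 2) + T (k + 1) + T k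

lemma T_pos : ∀ k, 0 < T k
  | 0 => by simp [T]
  | 1 => by simp [T]
  | 2 => by simp [T]
  | (k+3) => by have := T_pos k; simp only [T]; omega

lemma T_lt_succ : ∀ k, T k < T (k+1)
  | 0 => by simp [T]
  | 1 => by simp [T]
  | (k+2) => by have := T_pos k; have := T_pos (k+1); simp only [T]; omega

lemma T_mono : StrictMono T := strictMono_nat_of_lt_succ T_lt_succ

lemma T_ge : ∀ k, k + 1 ≤ T k := by
  intro k
  induction k with
  | zero => simp [T]
  | succ n ih => have := T_lt_succ n; omega

lemma T_add_le : ∀ m, T (m+1) + T m ≤ T (m+2)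
  | 0 => by simp [T]
  | (m+1) => by
      have := T_pos m
      show T (m+2) + T (m+1) ≤ T (m+2) + T (m+1) + T m
      omega

lemma T_succ_le_two : ∀ m, T (m+1) ≤ 2 * T m
  | 0 => by simp [T]
  | 1 => by simp [T]
  | (m+2) => by
      have h := T_add_le m
      show T (m+2) + T (m+1) + T m ≤ 2 * T (m+2)
      omega

/-- Key bound: any admissible prefix sum below index `n` is less than `T n`. -/
lemma sum_lt_T (p : ℕ → ℕ) (h1 : ∀ k, p k ≤ 1)
    (h3 : ∀ k, ¬(p k = 1 ∧ p (k+1) = 1 ∧ p (k+2) = 1)) :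
    ∀ n, (∑ k ∈ Finset.range n, p k * T k) < T n := by
  intro n
  induction n using Nat.strong_induction_on with
  | _ n ih =>
    match n with
    | 0 => simp [T]
    | 1 =>
      have h := h1 0
      simp only [Finset.sum_range_one]
      show p 0 * T 0 < T 1
      simp only [T]; omega
    | 2 =>
      have h0 := h1 0; have h1' := h1 1
      rw [Finset.sum_range_succ, Finset.sum_range_one]
      show p 0 * T 0 + p 1 * T 1 < T 2
      simp only [T]; omega
    | (n+3) =>
      have e1 : ∑ k ∈ Finset.range (n+3), p k * T k
          = (∑ k ∈ Finset.range (n+1), p k * T k) + p (n+1) * T (n+1) + p (n+2) * T (n+2) := by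
        rw [Finset.sum_range_succ, Finset.sum_range_succ]
      have hT : T (n+3) = T (n+2) + T (n+1) + T n := rfl
      rcases Nat.le_one_iff_eq_zero_or_eq_one.mp (h1 (n+2)) with hp2 | hp2
      · have ih2 := ih (n+2) (by omega)
        have hlt := T_lt_succ (n+2)
        rw [Finset.sum_range_succ, hp2]
        omega
      · rcases Nat.le_one_iff_eq_zero_or_eq_one.mp (h1 (n+1)) with hp1 | hp1
        · have ih1 := ih (n+1) (by omega)
          have hTn := T_pos n
          rw [e1, hp1, hp2, hT]
          omega
        · have hpn : p n = 0 := by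
            by_contra h
            have hn1 : p n = 1 := by have := h1 n; omega
            exact h3 n ⟨hn1, hp1, hp2⟩
          have e2 : ∑ k ∈ Finset.range (n+1), p k * T k
              = ∑ k ∈ Finset.range n, p k * T k := by
            rw [Finset.sum_range_succ, hpn]; ring
          have ihn := ih n (by omega)
          rw [e1, e2, hp1, hp2, hT]
          omega

lemma exists_rep : ∀ N : ℕ, ∃ p : ℕ →₀ ℕ, (∀ k, p k ≤ 1) ∧
    (∀ k, ¬(p k = 1 ∧ p (k+1) = 1 ∧ p (k+2) = 1)) ∧
    N = p.sum (fun k c => c * T k) := by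
  intro N
  induction N using Nat.strong_induction_on with
  | _ N ih =>
    rcases Nat.eq_zero_or_pos N with h0 | hpos
    · exact ⟨0, by simp, by simp, by simp [h0]⟩
    · obtain ⟨m, hTm, hmax⟩ : ∃ m, T m ≤ N ∧ N < T (m+1) := by
        refine ⟨Nat.findGreatest (fun m => T m ≤ N) N, ?_, ?_⟩
        · exact Nat.findGreatest_spec (P := fun m => T m ≤ N) (Nat.zero_le N)
            (by simp [T]; omega)
        · by_contra hc
          push_neg at hc
          by_cases hle : Nat.findGreatest (fun m => T m ≤ N) N + 1 ≤ N
          · exact Nat.findGreatest_is_greatest (P := fun m => T m ≤ N)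
              (Nat.lt_succ_self _) hle hc
          · have := T_ge (Nat.findGreatest (fun m => T m ≤ N) N + 1); omega
      have hrN : N - T m < N := by have := T_pos m; omega
      obtain ⟨p, hp1, hp3, hps⟩ := ih (N - T m) hrN
      have hterm : ∀ k, p k * T k ≤ N - T m := by
        intro k
        by_cases hk : k ∈ p.support
        · rw [hps]
          exact Finset.single_le_sum (f := fun k => p k * T k) (fun i _ => Nat.zero_le _) hk
        · simp [Finsupp.notMem_support_iff.mp hk]
      have hrTm : N - T m < T m := by
        have := T_succ_le_two m
        omega
      have hzero : ∀ k, m ≤ k → p k = 0 := by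
        intro k hk
        by_contra h
        have hpk : p k = 1 := by have := hp1 k; omega
        have h1 : T k ≤ N - T m := by have := hterm k; rw [hpk] at this; simpa using this
        have h2 : T m ≤ T k := T_mono.monotone hk
        omega
      have hpair : ∀ k, p k = 1 → p (k+1) = 1 → T k + T (k+1) ≤ N - T m := by
        intro k hk hk1
        have hsub : ({k, k+1} : Finset ℕ) ⊆ p.support := by
          intro x hx
          simp only [Finset.mem_insert, Finset.mem_singleton] at hx
          rcases hx with rfl | rfl <;> simp [Finsupp.mem_support_iff, hk, hk1]
        have hle := Finset.sum_le_sum_of_subset (f := fun k => p k * T k) hsub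
        rw [hps]
        calc T k + T (k+1) = ∑ x ∈ ({k, k+1} : Finset ℕ), p x * T x := by
              rw [Finset.sum_pair (by omega), hk, hk1]; ring
          _ ≤ _ := hle
      refine ⟨p + Finsupp.single m 1, ?_, ?_, ?_⟩
      · intro k
        rcases eq_or_ne k m with he | hne
        · rw [he]
          simp [Finsupp.add_apply, hzero m le_rfl]
        · simp [Finsupp.add_apply, Finsupp.single_apply, Ne.symm hne, hp1 k]
      · intro k hktrip
        obtain ⟨ha, hb, hc⟩ := hktrip
        have hone : ∀ j, ((p + Finsupp.single m 1 : ℕ →₀ ℕ)) j = 1 → j = m ∨ p j = 1 := by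
          intro j hj
          rcases eq_or_ne j m with he | hne
          · exact Or.inl he
          · right
            simpa [Finsupp.add_apply, Finsupp.single_apply, Ne.symm hne] using hj
        have hlt : ∀ j, m < j → ((p + Finsupp.single m 1 : ℕ →₀ ℕ)) j = 0 := by
          intro j hj
          have hmj : m ≠ j := by omega
          simp [Finsupp.add_apply, Finsupp.single_apply, hmj, hzero j (by omega)]
        rcases Nat.lt_trichotomy m k with h | h | h
        · rw [hlt k h] at ha; omega
        · rw [← h] at hb
          rw [hlt (m+1) (by omega)] at hb; omega
        · rcases Nat.lt_or_ge m (k+2) with h2 | h2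
          · have hm1 : m = k + 1 := by omega
            rw [hlt (k+2) (by omega)] at hc; omega
          · rcases Nat.lt_or_ge m (k+3) with h3 | h3
            · have hm2 : m = k + 2 := by omega
              have hpk : p k = 1 := by
                rcases hone k ha with h' | h'
                · omega
                · exact h'
              have hpk1 : p (k+1) = 1 := by
                rcases hone (k+1) hb with h' | h'
                · omega
                · exact h'
              have hsum := hpair k hpk hpk1
              rw [hm2] at hsum hTm hmax
              have hTe : T (k + 2 + 1) = T (k+2) + T (k+1) + T k := rfl
              omega
            · have hpk : p k = 1 := by
                rcases hone k ha with h' | h'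
                · omega
                · exact h'
              have hpk1 : p (k+1) = 1 := by
                rcases hone (k+1) hb with h' | h'
                · omega
                · exact h'
              have hpk2 : p (k+2) = 1 := by
                rcases hone (k+2) hc with h' | h'
                · omega
                · exact h'
              exact hp3 k ⟨hpk, hpk1, hpk2⟩
      · rw [Finsupp.sum_add_index (by intro a _; simp) (by intro a _ b c; ring)]
        rw [Finsupp.sum_single_index (by simp)]
        simp only [one_mul]
        omega

lemma rep_zero (r : ℕ →₀ ℕ) (hr : (0 : ℕ) = r.sum (fun k c => c * T k)) : r = 0 := by
  ext k
  by_contra h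
  have hk : k ∈ r.support := Finsupp.mem_support_iff.mpr (by simpa using h)
  have h1 : r k * T k ≤ 0 := by
    rw [hr]
    exact Finset.single_le_sum (f := fun k => r k * T k) (fun i _ => Nat.zero_le _) hk
  have h2 := T_pos k
  have h3 : r k * T k = 0 := Nat.le_zero.mp h1
  rcases Nat.mul_eq_zero.mp h3 with h' | h'
  · exact h (by simpa using h')
  · omega

lemma max_index (p : ℕ →₀ ℕ) (hp1 : ∀ k, p k ≤ 1)
    (hp3 : ∀ k, ¬(p k = 1 ∧ p (k+1) = 1 ∧ p (k+2) = 1))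
    (N : ℕ) (hps : N = p.sum (fun k c => c * T k)) (hpos : 0 < N) :
    ∃ m, p m = 1 ∧ T m ≤ N ∧ N < T (m+1) := by
  have hne : p.support.Nonempty := by
    by_contra h
    rw [Finset.not_nonempty_iff_eq_empty] at h
    have h0 : p = 0 := Finsupp.support_eq_empty.mp h
    rw [h0] at hps
    simp at hps
    omega
  refine ⟨p.support.max' hne, ?_, ?_, ?_⟩
  · have hm := p.support.max'_mem hne
    have := Finsupp.mem_support_iff.mp hm
    have := hp1 (p.support.max' hne)
    omega
  · have hm := p.support.max'_mem hne
    have h1 : p (p.support.max' hne) * T (p.support.max' hne) ≤ N := by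
      rw [hps]
      exact Finset.single_le_sum (f := fun k => p k * T k) (fun i _ => Nat.zero_le _) hm
    have h2 : p (p.support.max' hne) = 1 := by
      have := Finsupp.mem_support_iff.mp hm
      have := hp1 (p.support.max' hne)
      omega
    rw [h2] at h1; simpa using h1
  · have hsub : p.support ⊆ Finset.range (p.support.max' hne + 1) := by
      intro x hx
      simp only [Finset.mem_range]
      have := p.support.le_max' x hx
      omega
    have heq := Finsupp.sum_of_support_subset p hsub (fun k c => c * T k) (by intro i _; simp)
    rw [hps, heq]
    exact sum_lt_T (fun k => p k) hp1 hp3 _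

lemma unique_rep : ∀ N : ℕ, ∀ p q : ℕ →₀ ℕ,
    (∀ k, p k ≤ 1) → (∀ k, ¬(p k = 1 ∧ p (k+1) = 1 ∧ p (k+2) = 1)) →
    N = p.sum (fun k c => c * T k) →
    (∀ k, q k ≤ 1) → (∀ k, ¬(q k = 1 ∧ q (k+1) = 1 ∧ q (k+2) = 1)) →
    N = q.sum (fun k c => c * T k) → p = q := by
  intro N
  induction N using Nat.strong_induction_on with
  | _ N ih =>
    intro p q hp1 hp3 hps hq1 hq3 hqs
    rcases Nat.eq_zero_or_pos N with h0 | hpos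
    · subst h0
      rw [rep_zero p hps, rep_zero q hqs]
    · obtain ⟨mp, hpm, hTp, hTp'⟩ := max_index p hp1 hp3 N hps hpos
      obtain ⟨mq, hqm, hTq, hTq'⟩ := max_index q hq1 hq3 N hqs hpos
      have hmeq : mp = mq := by
        by_contra h
        rcases Nat.lt_or_ge mp mq with h' | h'
        · have : T (mp+1) ≤ T mq := T_mono.monotone (by omega)
          omega
        · have : T (mq+1) ≤ T mp := T_mono.monotone (by omega)
          omega
      subst hmeq
      have hmemp : mp ∈ p.support := Finsupp.mem_support_iff.mpr (by omega)
      have hmemq : mp ∈ q.support := Finsupp.mem_support_iff.mpr (by omega)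
      have hsplitp := Finsupp.add_sum_erase p mp (fun k c => c * T k) hmemp
      have hsplitq := Finsupp.add_sum_erase q mp (fun k c => c * T k) hmemq
      rw [hpm] at hsplitp
      rw [hqm] at hsplitq
      simp only [one_mul] at hsplitp hsplitq
      have hrp : N - T mp = (Finsupp.erase mp p).sum (fun k c => c * T k) := by omega
      have hrq : N - T mp = (Finsupp.erase mp q).sum (fun k c => c * T k) := by omega
      have hrN : N - T mp < N := by have := T_pos mp; omega
      have herase1 : ∀ (f : ℕ →₀ ℕ), (∀ k, f k ≤ 1) → ∀ k, (Finsupp.erase mp f) k ≤ 1 := by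
        intro f hf k
        rw [Finsupp.erase_apply]
        split
        · omega
        · exact hf k
      have herase3 : ∀ (f : ℕ →₀ ℕ),
          (∀ k, ¬(f k = 1 ∧ f (k+1) = 1 ∧ f (k+2) = 1)) →
          ∀ k, ¬((Finsupp.erase mp f) k = 1 ∧ (Finsupp.erase mp f) (k+1) = 1 ∧
              (Finsupp.erase mp f) (k+2) = 1) := by
        intro f hf k hk
        obtain ⟨ha, hb, hc⟩ := hk
        rw [Finsupp.erase_apply] at ha hb hc
        refine hf k ⟨?_, ?_, ?_⟩
        · revert ha; split <;> intro ha
          · omega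
          · exact ha
        · revert hb; split <;> intro hb
          · omega
          · exact hb
        · revert hc; split <;> intro hc
          · omega
          · exact hc
      have heq := ih (N - T mp) hrN (Finsupp.erase mp p) (Finsupp.erase mp q)
        (herase1 p hp1) (herase3 p hp3) hrp
        (herase1 q hq1) (herase3 q hq3) hrq
      ext k
      rcases eq_or_ne k mp with he | hne
      · rw [he, hpm, hqm]
      · have h1 : (Finsupp.erase mp p) k = (Finsupp.erase mp q) k := by rw [heq]
        rw [Finsupp.erase_apply, Finsupp.erase_apply] at h1
        simp only [hne, if_false] at h1
        exact h1

theorem tribonacci_zeckendorf (N : ℕ) :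
    ∃! p : ℕ →₀ ℕ, (∀ k, p k ≤ 1) ∧
      (∀ k, ¬(p k = 1 ∧ p (k + 1) = 1 ∧ p (k + 2) = 1)) ∧
      N = p.sum (fun k c => c * T k) := by
  obtain ⟨p, h1, h3, hs⟩ := exists_rep N
  refine ⟨p, ⟨h1, h3, hs⟩, ?_⟩
  intro q hq
  obtain ⟨hq1, hq3, hqs⟩ := hq
  exact unique_rep N q p hq1 hq3 hqs h1 h3 hs
end
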